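/- Let b ≥ 2 be an integer. For every ε > 0 there exists a constant C(ε) > 0 such that for all integers 0 ≤ L < M < N and all reals Q ≥ 1, sup_{β ∈ ℝ} ∑_{q ≤ Q} ∑_{h mod q} ∏_{L < n ≤ M} φ_b( (h/q + β)(b^n + b^{2N−n}) )² ≤ C(ε) · ( Q + b^{M − L + εN} ) · Q · b^{M−L}. -/

import Mathlib

open Real

/-- `φ_b(α) = |∑_{0 ≤ m < b} e(αm)|` where `e(x) = exp(2πix)`. -/
noncomputable def phiB (b : ℕ) (α : ℝ) : ℝ :=
  ‖∑ m ∈ Finset.range b, Complex.exp (2 * Real.pi * Complex.I * (α * m))‖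

noncomputable def pBe (x : ℝ) : ℂ := Complex.exp (2 * Real.pi * Complex.I * x)

lemma pBe_add (x y : ℝ) : pBe (x + y) = pBe x * pBe y := by
  unfold pBe; rw [← Complex.exp_add]; congr 1; push_cast; ring

lemma pBe_norm (x : ℝ) : ‖pBe x‖ = 1 := by
  unfold pBe
  rw [Complex.norm_exp]
  norm_num [Complex.mul_re, Complex.mul_im]

lemma pBe_conj (x : ℝ) : (starRingEnd ℂ) (pBe x) = pBe (-x) := by
  unfold pBe
  rw [← Complex.exp_conj]
  congr 1
  simp only [map_mul, Complex.conj_I, Complex.conj_ofReal]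
  rw [show ((starRingEnd ℂ) 2) = 2 from map_ofNat _ 2]
  push_cast
  ring

lemma pBe_int (n : ℤ) : pBe n = 1 := by
  unfold pBe
  rw [show 2 * (Real.pi:ℂ) * Complex.I * (n:ℝ) = n * (2 * Real.pi * Complex.I) by push_cast; ring]
  exact Complex.exp_int_mul_two_pi_mul_I n

lemma pBe_pow (x : ℝ) (h : ℕ) : pBe x ^ h = pBe (h * x) := by
  unfold pBe
  rw [← Complex.exp_nat_mul]
  congr 1; push_cast; ring

lemma pBe_orth (q : ℕ) (hq : 0 < q) (t : ℤ) :
    ∑ h ∈ Finset.range q, pBe ((h : ℝ) / q * t) = if (q : ℤ) ∣ t then (q : ℂ) else 0 := by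
  have hq0 : (q : ℝ) ≠ 0 := by positivity
  have hform : ∀ h : ℕ, pBe ((h : ℝ) / q * t) = pBe ((t : ℝ) / q) ^ h := by
    intro h
    rw [pBe_pow]
    congr 1
    field_simp
  rw [Finset.sum_congr rfl fun h _ => hform h]
  by_cases hdvd : (q : ℤ) ∣ t
  · obtain ⟨c, rfl⟩ := hdvd
    have h1 : ((((q : ℤ) * c : ℤ) : ℝ) / q) = (c : ℝ) := by push_cast; field_simp
    rw [h1, pBe_int c]
    simp
  · have hne : pBe ((t : ℝ) / q) ≠ 1 := by
      intro h1
      apply hdvd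
      unfold pBe at h1
      rw [Complex.exp_eq_one_iff] at h1
      obtain ⟨n, hn⟩ := h1
      have hne2 : (2 * (Real.pi:ℂ) * Complex.I) ≠ 0 := Complex.two_pi_I_ne_zero
      have h2 : (((t : ℝ) / q : ℝ) : ℂ) = (n : ℂ) :=
        mul_left_cancel₀ hne2 (hn.trans (by ring))
      have h3 : (t : ℝ) / q = (n : ℝ) := by exact_mod_cast h2
      have h4 : (t : ℝ) = (q : ℝ) * n := by
        rw [div_eq_iff hq0] at h3; rw [h3]; ring
      exact ⟨n, by exact_mod_cast h4⟩
    rw [geom_sum_eq hne]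
    have hpow : pBe ((t : ℝ) / q) ^ q = 1 := by
      rw [pBe_pow]
      rw [show (q : ℝ) * ((t : ℝ) / q) = (t : ℝ) by field_simp]
      exact pBe_int t
    rw [hpow]
    simp [hdvd]

-- base-b digit uniqueness
lemma pB_digits_unique (b : ℕ) (hb : 2 ≤ b) :
    ∀ (K : ℕ) (f g : ℕ → ℕ), (∀ j, j < K → f j < b) → (∀ j, j < K → g j < b) →
      (∑ j ∈ Finset.range K, f j * b ^ j) = (∑ j ∈ Finset.range K, g j * b ^ j) →
      ∀ j, j < K → f j = g j := by
  intro K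
  induction K with
  | zero => intro f g _ _ _ j hj; omega
  | succ K ih =>
    intro f g hf hg hsum j hj
    have hb0 : 0 < b := by omega
    have expand : ∀ u : ℕ → ℕ, ∑ j ∈ Finset.range (K+1), u j * b ^ j
        = u 0 + b * ∑ j ∈ Finset.range K, u (j+1) * b ^ j := by
      intro u
      rw [Finset.sum_range_succ', Finset.mul_sum]
      simp only [pow_succ, pow_zero, mul_one]
      rw [add_comm]
      congr 1
      exact Finset.sum_congr rfl fun i _ => by ring

    rw [expand f, expand g] at hsum
    have h0 : f 0 = g 0 := by
      have m1 : (f 0 + b * ∑ j ∈ Finset.range K, f (j+1) * b ^ j) % b = f 0 := by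
        rw [Nat.add_mul_mod_self_left]
        exact Nat.mod_eq_of_lt (hf 0 (by omega))
      have m2 : (g 0 + b * ∑ j ∈ Finset.range K, g (j+1) * b ^ j) % b = g 0 := by
        rw [Nat.add_mul_mod_self_left]
        exact Nat.mod_eq_of_lt (hg 0 (by omega))
      rw [← m1, ← m2, hsum]
    have htail : (∑ j ∈ Finset.range K, f (j+1) * b ^ j)
        = ∑ j ∈ Finset.range K, g (j+1) * b ^ j := by
      have := hsum
      rw [h0] at this
      have := Nat.add_left_cancel this
      exact Nat.eq_of_mul_eq_mul_left hb0 this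
    rcases Nat.eq_zero_or_pos j with rfl | hjpos
    · exact h0
    · obtain ⟨j', rfl⟩ : ∃ j', j = j' + 1 := ⟨j - 1, by omega⟩
      exact ih (fun i => f (i+1)) (fun i => g (i+1))
        (fun i hi => hf (i+1) (by omega)) (fun i hi => hg (i+1) (by omega)) htail j' (by omega)

lemma pB_geom_lt (b : ℕ) (hb : 1 ≤ b) : ∀ n : ℕ, ∑ i ∈ Finset.range n, (b-1) * b ^ i < b ^ n := by
  intro n
  induction n with
  | zero => simp
  | succ n ih =>
    rw [Finset.sum_range_succ, pow_succ]
    have hbn : 0 < b ^ n := Nat.pow_pos (by omega)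
    calc ∑ i ∈ Finset.range n, (b-1) * b ^ i + (b-1) * b ^ n
        < b ^ n + (b-1) * b ^ n := by omega
      _ = b ^ n + (b - 1) * b ^ n := rfl
      _ = (1 + (b-1)) * b ^ n := by ring
      _ = b * b ^ n := by congr 1; omega
      _ = b ^ n * b := by ring

lemma pB_divisor_bound (δ : ℝ) (hδ : 0 < δ) :
    ∃ C : ℝ, 0 < C ∧ ∀ m : ℕ, m ≠ 0 → (m.divisors.card : ℝ) ≤ C * (m : ℝ) ^ δ := by
  set c : ℝ := δ * Real.log 2 with hc
  have hlog2 : 0 < Real.log 2 := Real.log_pos (by norm_num)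
  have hc0 : 0 < c := by positivity
  set Kc : ℝ := max 1 c⁻¹ with hKc
  have hKc1 : 1 ≤ Kc := le_max_left _ _
  set T : ℕ := ⌈(2:ℝ) ^ (1/δ)⌉₊ with hT
  refine ⟨Kc ^ T, by positivity, ?_⟩
  intro m hm
  -- pointwise bounds
  have key : ∀ p ∈ m.primeFactors,
      ((m.factorization p + 1 : ℕ) : ℝ) ≤ (if p < T then Kc else 1) * ((p : ℝ) ^ (m.factorization p : ℕ)) ^ δ := by
    intro p hp
    have hpp : p.Prime := Nat.prime_of_mem_primeFactors hp
    have hp2 : (2 : ℝ) ≤ (p : ℝ) := by exact_mod_cast hpp.two_le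
    set k : ℕ := m.factorization p
    have hppos : (0:ℝ) < (p:ℝ) := by linarith
    have hrw : ((p : ℝ) ^ k) ^ δ = (p : ℝ) ^ ((k : ℝ) * δ) := by
      rw [← Real.rpow_natCast (p:ℝ) k, ← Real.rpow_mul (le_of_lt hppos)]
    rw [hrw]
    by_cases hsmall : p < T
    · simp only [hsmall, if_true]
      -- (k+1) ≤ Kc * p^(kδ), using p ≥ 2
      have h2 : (2:ℝ) ^ ((k:ℝ) * δ) ≤ (p:ℝ) ^ ((k:ℝ) * δ) :=
        Real.rpow_le_rpow (by norm_num) hp2 (by positivity)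
      have h3 : (1 + (k:ℝ) * c) ≤ (2:ℝ) ^ ((k:ℝ) * δ) := by
        rw [Real.rpow_def_of_pos (by norm_num : (0:ℝ) < 2)]
        rw [show Real.log 2 * ((k:ℝ) * δ) = (k:ℝ) * c from by rw [hc]; ring]
        have := Real.add_one_le_exp ((k:ℝ) * c)
        linarith
      have h4 : ((k:ℕ) + 1 : ℝ) ≤ Kc * (1 + (k:ℝ) * c) := by
        rcases le_or_gt 1 c with h | h
        · have : (1:ℝ) + k ≤ 1 + (k:ℝ) * c := by nlinarith [Nat.cast_nonneg (α := ℝ) k]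
          calc ((k:ℕ) + 1 : ℝ) = 1 + (k:ℝ) := by push_cast; ring
            _ ≤ 1 + (k:ℝ) * c := this
            _ ≤ Kc * (1 + (k:ℝ) * c) := le_mul_of_one_le_left (by positivity) hKc1
        · have hKinv : c⁻¹ ≤ Kc := le_max_right _ _
          have h1c : 1 ≤ c⁻¹ := (one_le_inv_iff₀).mpr ⟨hc0, le_of_lt h⟩
          calc ((k:ℕ) + 1 : ℝ) = 1 + (k:ℝ) := by push_cast; ring
            _ ≤ c⁻¹ + (k:ℝ) := by linarith
            _ = c⁻¹ * (1 + (k:ℝ) * c) := by field_simp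
            _ ≤ Kc * (1 + (k:ℝ) * c) := by
                apply mul_le_mul_of_nonneg_right hKinv
                nlinarith [Nat.cast_nonneg (α := ℝ) k]
      push_cast at h4 ⊢
      nlinarith [h3, h2, h4, hKc1]
    · simp only [hsmall, if_false, one_mul]
      -- p ≥ T so p^δ ≥ 2 : (k+1) ≤ 2^k ≤ p^(kδ)
      have hpT : (T : ℝ) ≤ (p : ℝ) := by exact_mod_cast Nat.le_of_not_lt hsmall
      have hT2 : (2:ℝ) ^ (1/δ) ≤ (p:ℝ) := le_trans (Nat.le_ceil _) hpT
      have h5 : (2:ℝ) ≤ (p:ℝ) ^ δ := by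
        have := Real.rpow_le_rpow (by positivity) hT2 (le_of_lt hδ)
        rwa [← Real.rpow_mul (by norm_num : (0:ℝ) ≤ 2), one_div_mul_cancel (ne_of_gt hδ), Real.rpow_one] at this
      have h6 : ((k:ℕ) + 1 : ℝ) ≤ (2:ℝ) ^ (k:ℕ) := by
        exact_mod_cast Nat.succ_le_of_lt (Nat.lt_two_pow_self (n := k))
      push_cast
      calc ((k:ℝ) + 1 : ℝ) ≤ (2:ℝ) ^ (k:ℕ) := by push_cast at h6; linarith
        _ ≤ ((p:ℝ) ^ δ) ^ (k:ℕ) := pow_le_pow_left₀ (by norm_num) h5 k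
        _ = (p:ℝ) ^ ((k:ℝ) * δ) := by
            rw [← Real.rpow_natCast ((p:ℝ)^δ) k, ← Real.rpow_mul (le_of_lt hppos)]
            ring_nf
  -- assemble
  have hcard : (m.divisors.card : ℝ) = ∏ p ∈ m.primeFactors, ((m.factorization p + 1 : ℕ) : ℝ) := by
    rw [Nat.card_divisors hm]
    push_cast
    rfl
  have hmprod : (m : ℝ) = ∏ p ∈ m.primeFactors, ((p : ℝ) ^ (m.factorization p : ℕ)) := by
    conv_lhs => rw [← Nat.factorization_prod_pow_eq_self hm]
    rw [Nat.prod_factorization_eq_prod_primeFactors]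
    push_cast
    rfl
  have hrpowprod : (m : ℝ) ^ δ = ∏ p ∈ m.primeFactors, ((p : ℝ) ^ (m.factorization p : ℕ)) ^ δ := by
    rw [hmprod, ← Real.finset_prod_rpow]
    intro i _
    positivity
  rw [hcard, hrpowprod]
  have step : ∏ p ∈ m.primeFactors, ((m.factorization p + 1 : ℕ) : ℝ)
      ≤ ∏ p ∈ m.primeFactors, ((if p < T then Kc else 1) * ((p : ℝ) ^ (m.factorization p : ℕ)) ^ δ) := by
    apply Finset.prod_le_prod
    · intro p _; positivity
    · exact key
  refine le_trans step ?_
  rw [Finset.prod_mul_distrib]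
  apply mul_le_mul_of_nonneg_right ?_ (by positivity)
  -- ∏ (if p < T then Kc else 1) ≤ Kc ^ T
  calc ∏ p ∈ m.primeFactors, (if p < T then Kc else 1)
      = ∏ p ∈ m.primeFactors.filter (· < T), Kc := by
        rw [Finset.prod_filter]
    _ = Kc ^ (m.primeFactors.filter (· < T)).card := by
        rw [Finset.prod_const]
    _ ≤ Kc ^ T := by
        apply pow_le_pow_right₀ hKc1
        calc (m.primeFactors.filter (· < T)).card ≤ (Finset.range T).card := by
              apply Finset.card_le_card
              intro p hp
              simp only [Finset.mem_filter] at hp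
              exact Finset.mem_range.mpr hp.2
          _ = T := Finset.card_range T
lemma pBe_sum {γ : Type*} (t : Finset γ) (g : γ → ℝ) :
    pBe (∑ x ∈ t, g x) = ∏ x ∈ t, pBe (g x) := by
  unfold pBe
  rw [← Complex.exp_sum]
  congr 1
  push_cast
  rw [Finset.mul_sum]

lemma pB_phiB_eq (b : ℕ) (y : ℝ) :
    phiB b y = ‖∑ m ∈ Finset.range b, pBe (y * m)‖ := by
  unfold phiB pBe
  congr 1
  refine Finset.sum_congr rfl fun m _ => ?_
  congr 1
  push_cast
  ring

lemma pB_prod_eq (b : ℕ) (s : Finset ℕ) (d : ℕ → ℕ) (α : ℝ) :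
    ∏ n ∈ s, phiB b (α * (d n : ℝ)) ^ 2
      = Complex.normSq (∑ p ∈ s.pi (fun _ => Finset.range b),
          pBe (α * ((∑ x ∈ s.attach, p x.1 x.2 * d x.1 : ℕ) : ℝ))) := by
  classical
  rw [Finset.prod_pow, ← Complex.sq_norm]
  congr 1
  calc ∏ n ∈ s, phiB b (α * (d n : ℝ))
      = ∏ n ∈ s, ‖∑ m ∈ Finset.range b, pBe ((α * d n) * m)‖ := by
        exact Finset.prod_congr rfl fun n _ => pB_phiB_eq b _
    _ = ‖∏ n ∈ s, ∑ m ∈ Finset.range b, pBe ((α * d n) * m)‖ := by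
        rw [norm_prod]
    _ = ‖∑ p ∈ s.pi (fun _ => Finset.range b),
          ∏ x ∈ s.attach, pBe ((α * d x.1) * (p x.1 x.2))‖ := by
        rw [Finset.prod_sum]
    _ = ‖∑ p ∈ s.pi (fun _ => Finset.range b),
          pBe (α * ((∑ x ∈ s.attach, p x.1 x.2 * d x.1 : ℕ) : ℝ))‖ := by
        congr 1
        refine Finset.sum_congr rfl fun p _ => ?_
        rw [← pBe_sum]
        congr 1
        push_cast
        rw [Finset.mul_sum]
        exact Finset.sum_congr rfl fun x _ => by ring

lemma pB_q_bound {ι : Type*} (X : Finset ι) (S : ι → ℕ) (q : ℕ) (hq : 0 < q) (β : ℝ) :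
    ∑ h ∈ Finset.range q, Complex.normSq (∑ p ∈ X, pBe (((h:ℝ)/q + β) * (S p : ℝ)))
      ≤ ∑ p ∈ X, ∑ p' ∈ X,
          (if (q:ℤ) ∣ ((S p : ℤ) - (S p' : ℤ)) then (q:ℝ) else 0) := by
  classical
  have key : (∑ h ∈ Finset.range q,
        (∑ p ∈ X, pBe (((h:ℝ)/q + β) * (S p : ℝ)))
          * (starRingEnd ℂ) (∑ p' ∈ X, pBe (((h:ℝ)/q + β) * (S p' : ℝ))))
      = ∑ p ∈ X, ∑ p' ∈ X,
          pBe (β * (((S p : ℤ) - (S p' : ℤ) : ℤ) : ℝ))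
            * (if (q:ℤ) ∣ ((S p : ℤ) - (S p' : ℤ)) then (q:ℂ) else 0) := by
    have step1 : ∀ h : ℕ,
        (∑ p ∈ X, pBe (((h:ℝ)/q + β) * (S p : ℝ)))
          * (starRingEnd ℂ) (∑ p' ∈ X, pBe (((h:ℝ)/q + β) * (S p' : ℝ)))
        = ∑ p ∈ X, ∑ p' ∈ X,
            pBe (β * (((S p : ℤ) - (S p' : ℤ) : ℤ) : ℝ))
              * pBe ((h:ℝ)/q * (((S p : ℤ) - (S p' : ℤ) : ℤ) : ℝ)) := by
      intro h
      rw [map_sum, Finset.sum_mul_sum]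
      refine Finset.sum_congr rfl fun p _ => Finset.sum_congr rfl fun p' _ => ?_
      rw [pBe_conj, ← pBe_add, ← pBe_add]
      congr 1
      push_cast
      ring
    rw [Finset.sum_congr rfl fun h _ => step1 h]
    rw [Finset.sum_comm]
    refine Finset.sum_congr rfl fun p _ => ?_
    rw [Finset.sum_comm]
    refine Finset.sum_congr rfl fun p' _ => ?_
    rw [← Finset.mul_sum, pBe_orth q hq]
  calc ∑ h ∈ Finset.range q, Complex.normSq (∑ p ∈ X, pBe (((h:ℝ)/q + β) * (S p : ℝ)))
      = (∑ h ∈ Finset.range q,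
          (∑ p ∈ X, pBe (((h:ℝ)/q + β) * (S p : ℝ)))
            * (starRingEnd ℂ) (∑ p' ∈ X, pBe (((h:ℝ)/q + β) * (S p' : ℝ)))).re := by
        rw [Complex.re_sum]
        refine Finset.sum_congr rfl fun h _ => ?_
        rw [Complex.mul_conj, Complex.ofReal_re]
    _ = (∑ p ∈ X, ∑ p' ∈ X,
          pBe (β * (((S p : ℤ) - (S p' : ℤ) : ℤ) : ℝ))
            * (if (q:ℤ) ∣ ((S p : ℤ) - (S p' : ℤ)) then (q:ℂ) else 0)).re := by rw [key]
    _ ≤ ‖∑ p ∈ X, ∑ p' ∈ X,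
          pBe (β * (((S p : ℤ) - (S p' : ℤ) : ℤ) : ℝ))
            * (if (q:ℤ) ∣ ((S p : ℤ) - (S p' : ℤ)) then (q:ℂ) else 0)‖ := by
        exact Complex.re_le_norm _
    _ ≤ ∑ p ∈ X, ∑ p' ∈ X,
          ‖pBe (β * (((S p : ℤ) - (S p' : ℤ) : ℤ) : ℝ))
            * (if (q:ℤ) ∣ ((S p : ℤ) - (S p' : ℤ)) then (q:ℂ) else 0)‖ := by
        refine le_trans (norm_sum_le _ _) (Finset.sum_le_sum fun p _ => norm_sum_le _ _)
    _ = ∑ p ∈ X, ∑ p' ∈ X,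
          (if (q:ℤ) ∣ ((S p : ℤ) - (S p' : ℤ)) then (q:ℝ) else 0) := by
        refine Finset.sum_congr rfl fun p _ => Finset.sum_congr rfl fun p' _ => ?_
        rw [norm_mul, pBe_norm, one_mul]
        split_ifs
        · simp
        · simp
lemma pB_coeffs (E A A' B B' : ℕ) (hE : 0 < E) (hA : A < E) (hA' : A' < E)
    (h : A + E * B = A' + E * B') : A = A' ∧ B = B' := by
  have m1 : (A + E * B) % E = A := by
    rw [Nat.add_mul_mod_self_left]; exact Nat.mod_eq_of_lt hA
  have m2 : (A' + E * B') % E = A' := by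
    rw [Nat.add_mul_mod_self_left]; exact Nat.mod_eq_of_lt hA'
  have hAA : A = A' := by rw [← m1, ← m2, h]
  refine ⟨hAA, ?_⟩
  rw [hAA] at h
  exact Nat.eq_of_mul_eq_mul_left hE (Nat.add_left_cancel h)

lemma pB_S_inj (b : ℕ) (hb : 2 ≤ b) (L M N : ℕ) (hLM : L < M) (hMN : M < N)
    (p p' : ∀ a ∈ Finset.Ioc L M, ℕ)
    (hp : p ∈ (Finset.Ioc L M).pi (fun _ => Finset.range b))
    (hp' : p' ∈ (Finset.Ioc L M).pi (fun _ => Finset.range b))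
    (heq : (∑ x ∈ (Finset.Ioc L M).attach, p x.1 x.2 * (b ^ (x.1:ℕ) + b ^ (2*N - x.1))) =
           ∑ x ∈ (Finset.Ioc L M).attach, p' x.1 x.2 * (b ^ (x.1:ℕ) + b ^ (2*N - x.1))) :
    p = p' := by
  classical
  have hb0 : 0 < b := by omega
  set v : ℕ → ℕ := fun n => if h : n ∈ Finset.Ioc L M then p n h else 0 with hv
  set v' : ℕ → ℕ := fun n => if h : n ∈ Finset.Ioc L M then p' n h else 0 with hv'
  -- convert attached sums to plain sums
  have hconv : ∀ (u : ∀ a ∈ Finset.Ioc L M, ℕ) (w : ℕ → ℕ),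
      (∑ x ∈ (Finset.Ioc L M).attach, u x.1 x.2 * w x.1)
      = ∑ n ∈ Finset.Ioc L M, (if h : n ∈ Finset.Ioc L M then u n h else 0) * w n := by
    intro u w
    rw [← Finset.sum_attach (Finset.Ioc L M) (fun n => (if h : n ∈ Finset.Ioc L M then u n h else 0) * w n)]
    exact Finset.sum_congr rfl fun x _ => by rw [dif_pos x.2]
  rw [hconv p (fun n => b ^ n + b ^ (2*N - n)), hconv p' (fun n => b ^ n + b ^ (2*N - n))] at heq
  have hvb : ∀ n ∈ Finset.Ioc L M, v n < b := by
    intro n hn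
    rw [hv]
    simp only [dif_pos hn]
    exact Finset.mem_range.mp (Finset.mem_pi.mp hp n hn)
  have hvb' : ∀ n ∈ Finset.Ioc L M, v' n < b := by
    intro n hn
    rw [hv']
    simp only [dif_pos hn]
    exact Finset.mem_range.mp (Finset.mem_pi.mp hp' n hn)
  -- split
  have hsplit : ∀ w : ℕ → ℕ,
      (∑ n ∈ Finset.Ioc L M, w n * (b ^ n + b ^ (2*N - n)))
      = (∑ n ∈ Finset.Ioc L M, w n * b ^ n)
        + b ^ (2*N - M) * (∑ n ∈ Finset.Ioc L M, w n * b ^ (M - n)) := by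
    intro w
    rw [Finset.mul_sum, ← Finset.sum_add_distrib]
    refine Finset.sum_congr rfl fun n hn => ?_
    rw [Finset.mem_Ioc] at hn
    have hpow : b ^ (2*N - n) = b ^ (2*N - M) * b ^ (M - n) := by
      rw [← pow_add]; congr 1; omega
    rw [hpow]; ring
  have hAlt : ∀ w : ℕ → ℕ, (∀ n ∈ Finset.Ioc L M, w n < b) →
      (∑ n ∈ Finset.Ioc L M, w n * b ^ n) < b ^ (2*N - M) := by
    intro w hw
    have h1 : (∑ n ∈ Finset.Ioc L M, w n * b ^ n) ≤ ∑ n ∈ Finset.Ioc L M, (b-1) * b ^ n :=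
      Finset.sum_le_sum fun n hn => Nat.mul_le_mul_right _ (by have := hw n hn; omega)
    have h3 : (∑ n ∈ Finset.Ioc L M, (b-1) * b ^ n) ≤ ∑ n ∈ Finset.range (M+1), (b-1) * b ^ n := by
      refine Finset.sum_le_sum_of_subset ?_
      intro n hn
      rw [Finset.mem_Ioc] at hn
      exact Finset.mem_range.mpr (by omega)
    have h4 := pB_geom_lt b (by omega) (M+1)
    have h5 : b ^ (M+1) ≤ b ^ (2*N - M) := Nat.pow_le_pow_right hb0 (by omega)
    omega
  rw [hsplit, hsplit] at heq
  obtain ⟨-, hB⟩ := pB_coeffs (b ^ (2*N - M)) _ _ _ _ (Nat.pow_pos hb0)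
    (hAlt v hvb) (hAlt v' hvb') heq
  -- reindex the B-sums
  set K := M - L with hK
  have hreix : ∀ w : ℕ → ℕ,
      (∑ n ∈ Finset.Ioc L M, w n * b ^ (M - n)) = ∑ j ∈ Finset.range K, w (M - j) * b ^ j := by
    intro w
    refine Finset.sum_nbij' (fun n => M - n) (fun j => M - j) ?_ ?_ ?_ ?_ ?_
    · intro n hn; rw [Finset.mem_Ioc] at hn
      show M - n ∈ Finset.range K
      exact Finset.mem_range.mpr (by omega)
    · intro j hj; rw [Finset.mem_range] at hj
      show M - j ∈ Finset.Ioc L M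
      exact Finset.mem_Ioc.mpr (by omega)
    · intro n hn; rw [Finset.mem_Ioc] at hn
      show M - (M - n) = n
      omega
    · intro j hj; rw [Finset.mem_range] at hj
      show M - (M - j) = j
      omega
    · intro n hn
      rw [Finset.mem_Ioc] at hn
      show w n * b ^ (M - n) = w (M - (M - n)) * b ^ (M - n)
      rw [show M - (M - n) = n from by omega]
  rw [hreix, hreix] at hB
  have hdig := pB_digits_unique b hb K (fun j => v (M - j)) (fun j => v' (M - j))
    (fun j hj => hvb (M - j) (Finset.mem_Ioc.mpr (by omega)))
    (fun j hj => hvb' (M - j) (Finset.mem_Ioc.mpr (by omega)))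
    hB
  -- conclude
  funext a ha
  have haIoc := ha
  rw [Finset.mem_Ioc] at haIoc
  have hj : M - a < K := by omega
  have h1 : v (M - (M - a)) = v' (M - (M - a)) := hdig (M - a) hj
  have h2 : M - (M - a) = a := by omega
  rw [h2] at h1
  have e1 : v a = p a ha := by rw [hv]; simp only [dif_pos ha]
  have e2 : v' a = p' a ha := by rw [hv']; simp only [dif_pos ha]
  rw [e1, e2] at h1
  exact h1

/-- `L²`-bound for partial products of `φ_b`-factors over shifted Farey fractions. -/
theorem phiB_L2_bound (b : ℕ) (hb : 2 ≤ b) (ε : ℝ) (hε : 0 < ε) :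
    ∃ C : ℝ, 0 < C ∧ ∀ (L M N : ℕ), L < M → M < N → ∀ Q : ℝ, 1 ≤ Q → ∀ β : ℝ,
      ∑ q ∈ Finset.Icc 1 ⌊Q⌋₊, ∑ h ∈ Finset.range q,
          ∏ n ∈ Finset.Ioc L M,
            phiB b (((h : ℝ) / q + β) * ((b : ℝ) ^ n + (b : ℝ) ^ (2 * N - n))) ^ 2 ≤
        C * (Q + (b : ℝ) ^ ((M : ℝ) - L + ε * N)) * Q * (b : ℝ) ^ (M - L) := by
  classical
  obtain ⟨Cd, hCd0, hCd⟩ := pB_divisor_bound (ε/5) (by positivity)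
  refine ⟨1 + Cd, by positivity, ?_⟩
  intro L M N hLM hMN Q hQ β
  have hb0 : (0:ℝ) < b := by positivity
  have hb1 : (1:ℝ) ≤ b := by exact_mod_cast (by omega : 1 ≤ b)
  have hQ0 : (0:ℝ) < Q := lt_of_lt_of_le one_pos hQ
  have hN2 : 2 ≤ N := by omega
  -- notation
  set X := (Finset.Ioc L M).pi (fun _ => Finset.range b) with hX
  set Sf : (∀ a ∈ Finset.Ioc L M, ℕ) → ℕ :=
    fun p => ∑ x ∈ (Finset.Ioc L M).attach, p x.1 x.2 * (b ^ (x.1:ℕ) + b ^ (2*N - x.1)) with hSf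
  set bEN : ℝ := (b:ℝ) ^ (ε * N) with hbEN
  have hbEN0 : 0 < bEN := Real.rpow_pos_of_pos hb0 _
  have hplt : ∀ p, p ∈ X → ∀ (a : ℕ) (ha : a ∈ Finset.Ioc L M), p a ha < b := by
    intro p hp a ha
    exact Finset.mem_range.mp (Finset.mem_pi.mp hp a ha)
  -- bound on Sf
  have hSle : ∀ p ∈ X, Sf p ≤ b ^ (3*N+2) := by
    intro p hp
    have hterm : ∀ x ∈ (Finset.Ioc L M).attach,
        p x.1 x.2 * (b ^ (x.1:ℕ) + b ^ (2*N - x.1)) ≤ b * b ^ (2*N+1) := by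
      intro x _
      have hx := x.2
      rw [Finset.mem_Ioc] at hx
      have h1 : b ^ (x.1:ℕ) ≤ b ^ (2*N) := Nat.pow_le_pow_right (by omega) (by omega)
      have h2 : b ^ (2*N - (x.1:ℕ)) ≤ b ^ (2*N) := Nat.pow_le_pow_right (by omega) (by omega)
      have h3 : b ^ (x.1:ℕ) + b ^ (2*N - x.1) ≤ b ^ (2*N+1) := by
        have h4 : 2 * b ^ (2*N) ≤ b * b ^ (2*N) := Nat.mul_le_mul_right _ hb
        have h5 : 2 * b ^ (2*N) ≤ b ^ (2*N+1) := by
          calc 2 * b ^ (2*N) ≤ b * b ^ (2*N) := h4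
            _ = b ^ (2*N+1) := by ring
        omega
      calc p x.1 x.2 * (b ^ (x.1:ℕ) + b ^ (2*N - x.1)) ≤ b * (b ^ (x.1:ℕ) + b ^ (2*N - x.1)) := by
            exact Nat.mul_le_mul_right _ (le_of_lt (hplt p hp x.1 x.2))
        _ ≤ b * b ^ (2*N+1) := Nat.mul_le_mul_left _ h3
    have hsum := Finset.sum_le_card_nsmul _ _ _ hterm
    rw [Finset.card_attach, Nat.card_Ioc, smul_eq_mul] at hsum
    calc Sf p ≤ (M - L) * (b * b ^ (2*N+1)) := hsum
      _ ≤ N * b ^ (2*N+2) := by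
          have : b * b ^ (2*N+1) = b ^ (2*N+2) := by ring
          rw [this]
          exact Nat.mul_le_mul_right _ (by omega)
      _ ≤ b ^ N * b ^ (2*N+2) := Nat.mul_le_mul_right _ (le_of_lt (Nat.lt_pow_self (n := N) (by omega)))
      _ = b ^ (3*N+2) := by rw [← pow_add]; congr 1; omega
  -- per-pair bound
  have pairb : ∀ p ∈ X, ∀ p' ∈ X,
      (∑ q ∈ Finset.Icc 1 ⌊Q⌋₊, if (q:ℤ) ∣ ((Sf p : ℤ) - (Sf p' : ℤ)) then (q:ℝ) else 0)
        ≤ (if p = p' then Q^2 else 0) + Q * (Cd * bEN) := by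
    intro p hp p' hp'
    have hqQ : ∀ q ∈ Finset.Icc 1 ⌊Q⌋₊, (q:ℝ) ≤ Q := by
      intro q hq
      rw [Finset.mem_Icc] at hq
      calc (q:ℝ) ≤ (⌊Q⌋₊:ℝ) := by exact_mod_cast hq.2
        _ ≤ Q := Nat.floor_le (le_of_lt hQ0)
    by_cases hpe : p = p'
    · subst hpe
      rw [if_pos rfl]
      have h0 : ((Sf p : ℤ) - (Sf p : ℤ)) = 0 := sub_self _
      have h1 : (∑ q ∈ Finset.Icc 1 ⌊Q⌋₊, if (q:ℤ) ∣ ((Sf p : ℤ) - (Sf p : ℤ)) then (q:ℝ) else 0)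
          = ∑ q ∈ Finset.Icc 1 ⌊Q⌋₊, (q:ℝ) := by
        refine Finset.sum_congr rfl fun q _ => ?_
        rw [if_pos (h0 ▸ dvd_zero _)]
      rw [h1]
      have h2 := Finset.sum_le_card_nsmul (Finset.Icc 1 ⌊Q⌋₊) (fun q => (q:ℝ)) Q hqQ
      rw [Nat.card_Icc, nsmul_eq_mul] at h2
      have h3 : ((⌊Q⌋₊ + 1 - 1 : ℕ):ℝ) ≤ Q := by
        simp only [Nat.add_sub_cancel]
        exact Nat.floor_le (le_of_lt hQ0)
      calc (∑ q ∈ Finset.Icc 1 ⌊Q⌋₊, (q:ℝ)) ≤ ((⌊Q⌋₊ + 1 - 1 : ℕ):ℝ) * Q := h2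
        _ ≤ Q * Q := mul_le_mul_of_nonneg_right h3 (le_of_lt hQ0)
        _ = Q^2 := by ring
        _ ≤ Q^2 + Q * (Cd * bEN) := le_add_of_nonneg_right (by positivity)
    · rw [if_neg hpe]
      have hSne : Sf p ≠ Sf p' := by
        intro hcon
        exact hpe (pB_S_inj b hb L M N hLM hMN p p' hp hp' hcon)
      set t : ℤ := (Sf p : ℤ) - (Sf p' : ℤ) with ht
      have ht0 : t ≠ 0 := sub_ne_zero.mpr (by exact_mod_cast hSne)
      set m := t.natAbs with hm
      have hm0 : m ≠ 0 := Int.natAbs_ne_zero.mpr ht0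
      have hmle : m ≤ b ^ (5*N) := by
        have h1 : m ≤ Sf p + Sf p' := by
          calc m = ((Sf p : ℤ) - (Sf p' : ℤ)).natAbs := rfl
            _ ≤ ((Sf p : ℤ)).natAbs + ((Sf p' : ℤ)).natAbs := Int.natAbs_sub_le _ _
            _ = Sf p + Sf p' := by simp
        have h2 : Sf p + Sf p' ≤ 2 * b ^ (3*N+2) := by
          have := hSle p hp; have := hSle p' hp'; omega
        have h3 : 2 * b ^ (3*N+2) ≤ b ^ (3*N+3) := by
          have : b ^ (3*N+3) = b * b ^ (3*N+2) := by ring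
          rw [this]
          exact Nat.mul_le_mul_right _ hb
        have h4 : b ^ (3*N+3) ≤ b ^ (5*N) := Nat.pow_le_pow_right (by omega) (by omega)
        omega
      have e0 : (∑ q ∈ Finset.Icc 1 ⌊Q⌋₊, if (q:ℤ) ∣ t then (q:ℝ) else 0)
          = ∑ q ∈ (Finset.Icc 1 ⌊Q⌋₊).filter (fun q : ℕ => (q:ℤ) ∣ t), (q:ℝ) :=
        (Finset.sum_filter _ _).symm
      have e1 := Finset.sum_le_card_nsmul ((Finset.Icc 1 ⌊Q⌋₊).filter (fun q : ℕ => (q:ℤ) ∣ t))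
        (fun q => (q:ℝ)) Q (fun q hq => hqQ q (Finset.mem_filter.mp hq).1)
      have e2 : ((Finset.Icc 1 ⌊Q⌋₊).filter (fun q : ℕ => (q:ℤ) ∣ t)).card ≤ m.divisors.card := by
        refine Finset.card_le_card ?_
        intro q hq
        rw [Finset.mem_filter] at hq
        rw [Nat.mem_divisors]
        refine ⟨?_, hm0⟩
        have hd1 : (q:ℤ) ∣ (m:ℤ) := Int.dvd_natAbs.mpr hq.2
        exact_mod_cast hd1
      have e3 : (m.divisors.card : ℝ) ≤ Cd * (m:ℝ) ^ (ε/5) := hCd m hm0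
      have e4 : (m:ℝ) ^ (ε/5) ≤ bEN := by
        calc (m:ℝ) ^ (ε/5) ≤ ((b ^ (5*N) : ℕ):ℝ) ^ (ε/5) :=
            Real.rpow_le_rpow (Nat.cast_nonneg m) (by exact_mod_cast hmle) (by positivity)
          _ = ((b:ℝ) ^ (5*N : ℕ)) ^ (ε/5) := by push_cast; ring_nf
          _ = bEN := by
              rw [← Real.rpow_natCast (b:ℝ) (5*N), ← Real.rpow_mul (le_of_lt hb0)]
              rw [hbEN]
              congr 1
              push_cast
              ring
      calc (∑ q ∈ Finset.Icc 1 ⌊Q⌋₊, if (q:ℤ) ∣ t then (q:ℝ) else 0)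
          = ∑ q ∈ (Finset.Icc 1 ⌊Q⌋₊).filter (fun q : ℕ => (q:ℤ) ∣ t), (q:ℝ) := e0
        _ ≤ (((Finset.Icc 1 ⌊Q⌋₊).filter (fun q : ℕ => (q:ℤ) ∣ t)).card : ℝ) * Q := by
            rw [nsmul_eq_mul] at e1
            exact e1
        _ ≤ (m.divisors.card : ℝ) * Q := by
            apply mul_le_mul_of_nonneg_right _ (le_of_lt hQ0)
            exact_mod_cast e2
        _ ≤ (Cd * (m:ℝ) ^ (ε/5)) * Q := mul_le_mul_of_nonneg_right e3 (le_of_lt hQ0)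
        _ ≤ (Cd * bEN) * Q := by
            apply mul_le_mul_of_nonneg_right _ (le_of_lt hQ0)
            exact mul_le_mul_of_nonneg_left e4 (le_of_lt hCd0)
        _ = Q * (Cd * bEN) := by ring
        _ ≤ 0 + Q * (Cd * bEN) := by linarith
  -- cardinality of X
  have hcard : (X.card : ℝ) = (b:ℝ) ^ (M - L) := by
    rw [hX, Finset.card_pi]
    rw [Finset.prod_congr rfl (fun a _ => Finset.card_range b), Finset.prod_const, Nat.card_Ioc]
    push_cast
    ring
  -- main chain
  have key1 : (∑ q ∈ Finset.Icc 1 ⌊Q⌋₊, ∑ h ∈ Finset.range q,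
        ∏ n ∈ Finset.Ioc L M,
          phiB b (((h : ℝ) / q + β) * ((b : ℝ) ^ n + (b : ℝ) ^ (2 * N - n))) ^ 2)
      = ∑ q ∈ Finset.Icc 1 ⌊Q⌋₊, ∑ h ∈ Finset.range q,
          Complex.normSq (∑ p ∈ X, pBe (((h:ℝ)/q + β) * (Sf p : ℝ))) := by
    refine Finset.sum_congr rfl fun q _ => Finset.sum_congr rfl fun h _ => ?_
    calc (∏ n ∈ Finset.Ioc L M,
            phiB b (((h : ℝ) / q + β) * ((b : ℝ) ^ n + (b : ℝ) ^ (2 * N - n))) ^ 2)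
        = ∏ n ∈ Finset.Ioc L M,
            phiB b (((h : ℝ) / q + β) * (((b ^ n + b ^ (2*N - n) : ℕ)) : ℝ)) ^ 2 := by
          refine Finset.prod_congr rfl fun n _ => ?_
          have harg : ((h : ℝ) / q + β) * ((b : ℝ) ^ n + (b : ℝ) ^ (2 * N - n))
              = ((h : ℝ) / q + β) * (((b ^ n + b ^ (2*N - n) : ℕ)) : ℝ) := by
            push_cast
            ring
          rw [harg]
      _ = Complex.normSq (∑ p ∈ X, pBe (((h:ℝ)/q + β) * (Sf p : ℝ))) :=
          pB_prod_eq b (Finset.Ioc L M) (fun n => b ^ n + b ^ (2*N - n)) ((h:ℝ)/q + β)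
  rw [key1]
  have key2 : (∑ q ∈ Finset.Icc 1 ⌊Q⌋₊, ∑ h ∈ Finset.range q,
        Complex.normSq (∑ p ∈ X, pBe (((h:ℝ)/q + β) * (Sf p : ℝ))))
      ≤ ∑ p ∈ X, ∑ p' ∈ X, ∑ q ∈ Finset.Icc 1 ⌊Q⌋₊,
          (if (q:ℤ) ∣ ((Sf p : ℤ) - (Sf p' : ℤ)) then (q:ℝ) else 0) := by
    have step : (∑ q ∈ Finset.Icc 1 ⌊Q⌋₊, ∑ h ∈ Finset.range q,
          Complex.normSq (∑ p ∈ X, pBe (((h:ℝ)/q + β) * (Sf p : ℝ))))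
        ≤ ∑ q ∈ Finset.Icc 1 ⌊Q⌋₊, ∑ p ∈ X, ∑ p' ∈ X,
            (if (q:ℤ) ∣ ((Sf p : ℤ) - (Sf p' : ℤ)) then (q:ℝ) else 0) := by
      refine Finset.sum_le_sum fun q hq => ?_
      have hq1 : 0 < q := (Finset.mem_Icc.mp hq).1
      exact pB_q_bound X Sf q hq1 β
    refine le_trans step (le_of_eq ?_)
    rw [Finset.sum_comm]
    exact Finset.sum_congr rfl fun p _ => Finset.sum_comm
  refine le_trans key2 ?_
  have key3 : (∑ p ∈ X, ∑ p' ∈ X, ∑ q ∈ Finset.Icc 1 ⌊Q⌋₊,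
        (if (q:ℤ) ∣ ((Sf p : ℤ) - (Sf p' : ℤ)) then (q:ℝ) else 0))
      ≤ ∑ p ∈ X, ∑ p' ∈ X, ((if p = p' then Q^2 else 0) + Q * (Cd * bEN)) :=
    Finset.sum_le_sum fun p hp => Finset.sum_le_sum fun p' hp' => pairb p hp p' hp'
  refine le_trans key3 ?_
  have key4 : (∑ p ∈ X, ∑ p' ∈ X, ((if p = p' then Q^2 else 0) + Q * (Cd * bEN)))
      = (X.card : ℝ) * Q^2 + (X.card : ℝ) * (X.card : ℝ) * (Q * (Cd * bEN)) := by
    have inner : ∀ p ∈ X, (∑ p' ∈ X, ((if p = p' then Q^2 else 0) + Q * (Cd * bEN)))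
        = Q^2 + (X.card : ℝ) * (Q * (Cd * bEN)) := by
      intro p hp
      rw [Finset.sum_add_distrib, Finset.sum_ite_eq X p (fun _ => Q^2), if_pos hp,
        Finset.sum_const, nsmul_eq_mul]
    rw [Finset.sum_congr rfl inner, Finset.sum_const, nsmul_eq_mul]
    ring
  rw [key4]
  -- final numeric comparison
  have hBB : (b:ℝ) ^ (M - L) * bEN = (b:ℝ) ^ ((M:ℝ) - L + ε * N) := by
    rw [← Real.rpow_natCast (b:ℝ) (M - L), hbEN, ← Real.rpow_add hb0]
    congr 1
    rw [Nat.cast_sub (le_of_lt hLM)]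
  rw [hcard]
  have hz : (0:ℝ) < (b:ℝ) ^ (M - L) := by positivity
  set z : ℝ := (b:ℝ) ^ (M - L)
  set y : ℝ := bEN
  rw [← hBB]
  have expand : (1 + Cd) * (Q + z * y) * Q * z
      = z * Q^2 + z*z*(Q*y) + Cd * (Q^2 * z) + Cd * (z*z*(Q*y)) := by ring
  rw [expand]
  have h1 : 0 ≤ z*z*(Q*y) := by positivity
  have h2 : 0 ≤ Cd * (Q^2 * z) := by positivity
  nlinarith [h1, h2]
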